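/- arXiv:1403.7606 — 5 statements merged into one kernel-verified Lean document; each statement's English description precedes it below -/
import Mathlib

section
/- Let G = G₁ × ⋯ × Gₙ be a direct product of finite groups and let φ : G → G be the automorphism φ(g₁,…,gₙ) = (φₙ(gₙ), φ₁(g₁), …, φ_{n-1}(g_{n-1})) where each φᵢ : Gᵢ → G_{i+1} (indices mod n) is a group isomorphism. Set ψ₁ = φₙ ∘ φ_{n-1} ∘ ⋯ ∘ φ₁ : G₁ → G₁ (equivalently ψ₁ = φₙ⋯φ₁ composed appropriately so it is an automorphism of G₁). Then the inclusion g ↦ (g, 1, …, 1) induces a bijection from the set of ψ₁-conjugacy classes H¹(G₁, ψ₁) onto the set of φ-conjugacy classes H¹(G, φ). -/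
/-- Let `G = G₁ × ⋯ × Gₙ` and let `φ` be the automorphism cyclically
permuting the factors via isomorphisms `φᵢ : Gᵢ → G_{i+1}` (indices mod `n`), so that
`φ(g) (i+1) = φᵢ(g i)`.  Let `ψ₁` be the around-the-cycle composite automorphism of
`G₁` (equivalently, `(φ^n g) 0 = ψ₁ (g 0)`).  Then `g ↦ (g,1,…,1)` induces a bijection
`H¹(G₁, ψ₁) → H¹(G, φ)` of twisted conjugacy classes: it identifies the ψ₁-conjugacy
relation with the φ-conjugacy relation, and every element of `G` is φ-conjugate to the
image of some element of `G₁`. -/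
theorem phiConjClasses_bijection_cyclic {n : ℕ} [NeZero n]
    (Gi : Fin n → Type*) [∀ i, Group (Gi i)] [∀ i, Fintype (Gi i)]
    (φi : ∀ i : Fin n, Gi i ≃* Gi (i + 1))
    (φ : MulAut (∀ i, Gi i))
    (hφ : ∀ (g : ∀ i, Gi i) (i : Fin n), φ g (i + 1) = φi i (g i))
    (ψ₁ : MulAut (Gi 0))
    (hψ₁ : ∀ g : ∀ i, Gi i, (φ ^ n) g 0 = ψ₁ (g 0)) :
    (∀ x y : Gi 0,
        (∃ z : Gi 0, x = z⁻¹ * y * ψ₁ z) ↔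
          ∃ z : ∀ i, Gi i,
            (Pi.mulSingle 0 x : ∀ i, Gi i) = z⁻¹ * Pi.mulSingle 0 y * φ z) ∧
      ∀ g : ∀ i, Gi i, ∃ (x : Gi 0) (z : ∀ i, Gi i),
        g = z⁻¹ * Pi.mulSingle 0 x * φ z := by
  have hn : 0 < n := Nat.pos_of_ne_zero (NeZero.ne n)
  have h1n : ((1 : Fin n) : ℕ) = 1 % n := rfl
  -- value of successor in `Fin n` when it does not wrap around
  have hB : ∀ j : Fin n, j + 1 ≠ 0 → ((j + 1 : Fin n) : ℕ) = (j : ℕ) + 1 := by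
    intro j hj
    have hlt := j.isLt
    have hn2 : 2 ≤ n := by
      by_contra h
      have hn1 : n = 1 := by omega
      subst hn1
      exact hj (Subsingleton.elim _ _)
    have hne : (j : ℕ) + 1 ≠ n := by
      intro hc
      apply hj; apply Fin.ext
      rw [Fin.val_add, h1n, Nat.mod_eq_of_lt (by omega : 1 < n), hc, Nat.mod_self,
        Fin.val_zero n]
    rw [Fin.val_add, h1n, Nat.mod_eq_of_lt (by omega : 1 < n),
      Nat.mod_eq_of_lt (by omega)]
  -- value of a predecessor of `0`
  have hval0 : ∀ j : Fin n, j + 1 = 0 → (j : ℕ) = n - 1 := by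
    intro j hj
    have hlt := j.isLt
    have hv := congrArg Fin.val hj
    rw [Fin.val_add, Fin.val_zero n, h1n] at hv
    rcases Nat.lt_or_ge n 2 with h | h
    · have hn1 : n = 1 := by omega
      subst hn1
      omega
    · rw [Nat.mod_eq_of_lt (by omega : 1 < n)] at hv
      have hd := Nat.dvd_of_mod_eq_zero hv
      have := Nat.le_of_dvd (by omega) hd
      omega
  have hne0 : ∀ j : Fin n, 1 ≤ ((j + 1 : Fin n) : ℕ) → j + 1 ≠ 0 := by
    intro j h hc
    rw [hc, Fin.val_zero n] at h
    omega
  have hpow : ∀ (k : ℕ) (z : ∀ i, Gi i), (φ ^ (k + 1)) z = φ ((φ ^ k) z) := by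
    intro k z; rw [pow_succ']; rfl
  -- `φ X` at coordinate `i` depends only on `X` at predecessors of `i`
  have H : ∀ (X Y : ∀ i, Gi i) (i : Fin n),
      (∀ j, j + 1 = i → X j = Y j) → φ X i = φ Y i := by
    intro X Y i hXY
    obtain ⟨j, rfl⟩ : ∃ j, j + 1 = i := ⟨i - 1, sub_add_cancel i 1⟩
    rw [hφ, hφ, hXY j rfl]
  have K : ∀ (X : ∀ i, Gi i) (i : Fin n),
      (∀ j, j + 1 = i → X j = 1) → φ X i = 1 := by
    intro X i hX
    obtain ⟨j, rfl⟩ : ∃ j, j + 1 = i := ⟨i - 1, sub_add_cancel i 1⟩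
    rw [hφ, hX j rfl, map_one]
  constructor
  · intro x y
    constructor
    · rintro ⟨z, hz⟩
      refine ⟨fun i => (φ ^ (i : ℕ)) (Pi.mulSingle 0 z) i, ?_⟩
      funext i
      simp only [Pi.mul_apply, Pi.inv_apply]
      by_cases hi : i = 0
      · subst hi
        have hz0 : ((0 : Fin n) : ℕ) = 0 := Fin.val_zero n
        have hKey : φ (fun i => (φ ^ (i : ℕ)) (Pi.mulSingle 0 z) i) 0 = ψ₁ z := by
          have h1 := hψ₁ (Pi.mulSingle (0 : Fin n) z)
          rw [Pi.mulSingle_eq_same] at h1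
          rw [← h1]
          rw [show φ ^ n = φ ^ ((n - 1) + 1) from congrArg (fun t => φ ^ t) (by omega),
            hpow]
          apply H
          intro j hj
          show (φ ^ ((j : Fin n) : ℕ)) (Pi.mulSingle 0 z) j
              = (φ ^ (n - 1)) (Pi.mulSingle 0 z) j
          rw [hval0 j hj]
        rw [hKey, Pi.mulSingle_eq_same, Pi.mulSingle_eq_same, hz0, pow_zero]
        show x = ((1 : MulAut (∀ i, Gi i)) (Pi.mulSingle 0 z) 0)⁻¹ * y * ψ₁ z
        rw [MulAut.one_apply, Pi.mulSingle_eq_same]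
        exact hz
      · rw [Pi.mulSingle_eq_of_ne hi, Pi.mulSingle_eq_of_ne hi]
        have hKey : φ (fun i' => (φ ^ (i' : ℕ)) (Pi.mulSingle 0 z) i') i
            = (φ ^ (i : ℕ)) (Pi.mulSingle 0 z) i := by
          obtain ⟨j, rfl⟩ : ∃ j, j + 1 = i := ⟨i - 1, sub_add_cancel i 1⟩
          rw [hφ]
          show φi j ((φ ^ ((j : Fin n) : ℕ)) (Pi.mulSingle 0 z) j)
              = (φ ^ (((j + 1 : Fin n)) : ℕ)) (Pi.mulSingle 0 z) (j + 1)
          rw [hB j hi, hpow, hφ]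
        rw [hKey]
        group
    · rintro ⟨Z, hZ⟩
      have hco : ∀ i, (Pi.mulSingle (0 : Fin n) x : ∀ i, Gi i) i
          = (Z i)⁻¹ * (Pi.mulSingle (0 : Fin n) y : ∀ i, Gi i) i * φ Z i := by
        intro i
        have := congrFun hZ i
        simpa only [Pi.mul_apply, Pi.inv_apply] using this
      have R : ∀ j : Fin n, j + 1 ≠ 0 → Z (j + 1) = φi j (Z j) := by
        intro j hj
        have h := hco (j + 1)
        rw [Pi.mulSingle_eq_of_ne hj, Pi.mulSingle_eq_of_ne hj, hφ, mul_one] at h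
        exact inv_mul_eq_one.mp h.symm
      have C : ∀ (k : ℕ) (i : Fin n), k ≤ (i : ℕ) → (φ ^ k) Z i = Z i := by
        intro k
        induction k with
        | zero => intro i _; rw [pow_zero]; rfl
        | succ k ih =>
          intro i hk
          obtain ⟨j, rfl⟩ : ∃ j, j + 1 = i := ⟨i - 1, sub_add_cancel i 1⟩
          have hj0 : j + 1 ≠ 0 := hne0 j (by omega)
          rw [hB j hj0] at hk
          rw [hpow, hφ, ih j (by omega)]
          exact (R j hj0).symm
      refine ⟨Z 0, ?_⟩
      have h0 := hco 0
      rw [Pi.mulSingle_eq_same, Pi.mulSingle_eq_same] at h0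
      have hφZ0 : φ Z 0 = ψ₁ (Z 0) := by
        rw [← hψ₁ Z]
        rw [show φ ^ n = φ ^ ((n - 1) + 1) from congrArg (fun t => φ ^ t) (by omega),
          hpow]
        apply H
        intro j hj
        exact (C (n - 1) j (le_of_eq (hval0 j hj).symm)).symm
      rw [hφZ0] at h0
      exact h0
  · intro g
    have main : ∀ m : ℕ, ∃ (h : ∀ i, Gi i) (z : ∀ i, Gi i),
        g = z⁻¹ * h * φ z ∧ ∀ i : Fin n, 1 ≤ (i : ℕ) → (i : ℕ) ≤ m → h i = 1 := by
      intro m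
      induction m with
      | zero =>
        exact ⟨g, 1, by simp, fun i h1 h2 => absurd (h1.trans h2) (by omega)⟩
      | succ m ih =>
        obtain ⟨h, z, hg, hh⟩ := ih
        by_cases hlt : m + 1 < n
        · have hn2 : 2 ≤ n := by omega
          have hone : (1 : Fin n) ≠ 0 := by
            intro hc
            have := congrArg Fin.val hc
            rw [h1n, Fin.val_zero n, Nat.mod_eq_of_lt (by omega : 1 < n)] at this
            omega
          refine ⟨(Pi.mulSingle (⟨m + 1, hlt⟩ : Fin n) (h ⟨m + 1, hlt⟩))⁻¹ * h *
              φ (Pi.mulSingle ⟨m + 1, hlt⟩ (h ⟨m + 1, hlt⟩)),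
            (Pi.mulSingle (⟨m + 1, hlt⟩ : Fin n) (h ⟨m + 1, hlt⟩))⁻¹ * z, ?_, ?_⟩
          · rw [hg, map_mul, map_inv, mul_inv_rev, inv_inv]
            group
          · intro i h1 h2
            simp only [Pi.mul_apply, Pi.inv_apply]
            by_cases hc : i = ⟨m + 1, hlt⟩
            · subst hc
              have hw1 : φ (Pi.mulSingle (⟨m + 1, hlt⟩ : Fin n) (h ⟨m + 1, hlt⟩))
                  ⟨m + 1, hlt⟩ = 1 := by
                apply K
                intro j hj
                have hjne : j ≠ ⟨m + 1, hlt⟩ := by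
                  intro hc2
                  rw [hc2] at hj
                  exact hone (add_eq_left.mp hj)
                exact Pi.mulSingle_eq_of_ne hjne _
              rw [hw1, Pi.mulSingle_eq_same, mul_one, inv_mul_cancel]
            · by_cases hc2 : i = (⟨m + 1, hlt⟩ : Fin n) + 1
              · exfalso
                subst hc2
                by_cases hz0 : (⟨m + 1, hlt⟩ : Fin n) + 1 = 0
                · rw [hz0, Fin.val_zero n] at h1
                  omega
                · rw [hB _ hz0] at h2
                  simp only [] at h2
                  omega
              · have hw1 : φ (Pi.mulSingle (⟨m + 1, hlt⟩ : Fin n) (h ⟨m + 1, hlt⟩)) i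
                    = 1 := by
                  apply K
                  intro j hj
                  have hjne : j ≠ ⟨m + 1, hlt⟩ := by
                    intro hc3
                    subst hc3
                    exact hc2 hj.symm
                  exact Pi.mulSingle_eq_of_ne hjne _
                have hile : (i : ℕ) ≤ m := by
                  have : (i : ℕ) ≠ m + 1 := by
                    intro hc3
                    exact hc (Fin.ext hc3)
                  omega
                rw [hw1, Pi.mulSingle_eq_of_ne hc, hh i h1 hile, inv_one, one_mul,
                  mul_one]
        · exact ⟨h, z, hg, fun i h1 h2 => hh i h1 (by have := i.isLt; omega)⟩
    obtain ⟨h, z, hg, hh⟩ := main n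
    refine ⟨h 0, z, ?_⟩
    have hsingle : h = Pi.mulSingle 0 (h 0) := by
      funext i
      by_cases hi : i = 0
      · subst hi; rw [Pi.mulSingle_eq_same]
      · rw [Pi.mulSingle_eq_of_ne hi]
        refine hh i ?_ i.isLt.le
        have hv : (i : ℕ) ≠ 0 := by
          intro hc
          exact hi (Fin.ext (by rw [hc, Fin.val_zero n]))
        omega
    rw [← hsingle]
    exact hg
end

section
/- In the setting of a direct product G = G₁ × ⋯ × Gₙ with cyclic-permutation automorphism φ as above, for every g ∈ G₁ the φ-centraliser of ḡ = (g,1,…,1) in G has the same cardinality as the ψ₁-centraliser of g in G₁: |C_{G,φ}(ḡ)| = |C_{G₁,ψ₁}(g)|. -/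
/-- in the cyclic-permutation setting, for `g ∈ G₁` and
`ḡ = (g,1,…,1) ∈ G = G₁ × ⋯ × Gₙ` we have `|C_{G,φ}(ḡ)| = |C_{G₁,ψ₁}(g)|`, where
`C_{H,α}(x) = {h ∈ H : h⁻¹ x α(h) = x}` denotes the twisted centraliser. -/
theorem card_phiCentraliser_eq_cyclic {n : ℕ} [NeZero n]
    (Gi : Fin n → Type*) [∀ i, Group (Gi i)] [∀ i, Fintype (Gi i)]
    (φi : ∀ i : Fin n, Gi i ≃* Gi (i + 1))
    (φ : MulAut (∀ i, Gi i))
    (hφ : ∀ (g : ∀ i, Gi i) (i : Fin n), φ g (i + 1) = φi i (g i))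
    (ψ₁ : MulAut (Gi 0))
    (hψ₁ : ∀ g : ∀ i, Gi i, (φ ^ n) g 0 = ψ₁ (g 0))
    (g : Gi 0) :
    Nat.card {k : ∀ i, Gi i //
        k⁻¹ * Pi.mulSingle 0 g * φ k = Pi.mulSingle 0 g} =
      Nat.card {k : Gi 0 // k⁻¹ * g * ψ₁ k = g} := by
  obtain ⟨m, rfl⟩ : ∃ m, n = m + 1 :=
    ⟨n - 1, (Nat.succ_pred_eq_of_pos (Nat.pos_of_ne_zero (NeZero.ne n))).symm⟩
  set K : Gi 0 → ∀ i, Gi i := fun x i => (φ ^ (i : ℕ)) (Pi.mulSingle 0 x) i with hKdef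
  have hK0 : ∀ x, K x 0 = x := by
    intro x
    simp [hKdef]
  have hadd1 : ∀ i : Fin (m + 1), i ≠ Fin.last m → ((i + 1 : Fin (m+1)) : ℕ) = (i : ℕ) + 1 := by
    intro i hi
    rw [Fin.val_add_one]
    simp [hi]
  have haddne : ∀ i : Fin (m + 1), i ≠ Fin.last m → i + 1 ≠ 0 := by
    intro i hi h
    apply hi
    have : i + 1 = Fin.last m + 1 := by rw [h, Fin.last_add_one]
    exact add_right_cancel this
  have hKsucc : ∀ x (i : Fin (m + 1)), i ≠ Fin.last m → K x (i + 1) = φi i (K x i) := by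
    intro x i hi
    have h2 : K x (i + 1) = (φ ^ ((i : ℕ) + 1)) (Pi.mulSingle 0 x) (i + 1) := by
      simp only [hKdef, hadd1 i hi]
    rw [h2, pow_succ', MulAut.mul_apply, hφ]
  have hKlast : ∀ x, φ (K x) 0 = ψ₁ x := by
    intro x
    have e4 : φ (K x) (Fin.last m + 1) =
        (φ ^ (m + 1)) (Pi.mulSingle 0 x) (Fin.last m + 1) := by
      rw [hφ, pow_succ', MulAut.mul_apply, hφ]
      rfl
    rw [Fin.last_add_one] at e4
    rw [e4, hψ₁, Pi.mulSingle_eq_same]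
  have huniq : ∀ k : ∀ i, Gi i,
      (∀ i : Fin (m + 1), i ≠ Fin.last m → k (i + 1) = φi i (k i)) → k = K (k 0) := by
    intro k hk
    funext i
    induction i using Fin.induction with
    | zero => rw [hK0]
    | succ j ih =>
      have hj : (j.castSucc : Fin (m+1)) ≠ Fin.last m := (Fin.castSucc_lt_last j).ne
      have hs : j.castSucc + 1 = j.succ := Fin.coeSucc_eq_succ
      rw [← hs, hk _ hj, hKsucc _ _ hj, ih]
  -- decompose i ≠ 0 as j + 1
  have hdecomp : ∀ i : Fin (m + 1), i ≠ 0 → ∃ j : Fin (m + 1), j ≠ Fin.last m ∧ i = j + 1 := by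
    intro i hi
    refine ⟨i - 1, ?_, (sub_add_cancel i 1).symm⟩
    intro h
    apply hi
    have : i - 1 + 1 = Fin.last m + 1 := by rw [h]
    rw [Fin.last_add_one] at this
    rw [← this]; exact (sub_add_cancel i 1).symm
  have hcond : ∀ k : ∀ i, Gi i,
      (k⁻¹ * Pi.mulSingle 0 g * φ k = Pi.mulSingle 0 g) ↔
      ((k 0)⁻¹ * g * φ k 0 = g ∧ ∀ i, i ≠ 0 → φ k i = k i) := by
    intro k
    rw [funext_iff]
    constructor
    · intro h
      constructor
      · have := h 0
        simpa using this
      · intro i hi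
        have := h i
        simp only [Pi.mul_apply, Pi.inv_apply, Pi.mulSingle_eq_of_ne hi] at this
        rw [mul_one, inv_mul_eq_one] at this
        exact this.symm
    · rintro ⟨h0, h1⟩ i
      by_cases hi : i = 0
      · subst hi
        simpa using h0
      · simp [Pi.mulSingle_eq_of_ne hi, h1 i hi]
  apply Nat.card_congr
  refine ⟨fun k => ⟨k.1 0, ?_⟩, fun x => ⟨K x.1, ?_⟩, ?_, ?_⟩
  · obtain ⟨h0, h1⟩ := (hcond k.1).mp k.2
    have hrec : ∀ i : Fin (m + 1), i ≠ Fin.last m → k.1 (i + 1) = φi i (k.1 i) := by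
      intro i hi
      rw [← h1 _ (haddne i hi), hφ]
    have hk : k.1 = K (k.1 0) := huniq _ hrec
    have : φ k.1 0 = ψ₁ (k.1 0) := by rw [hk, hKlast, hK0]
    rw [← this]; exact h0
  · apply (hcond _).mpr
    constructor
    · rw [hKlast, hK0]; exact x.2
    · intro i hi
      obtain ⟨j, hj, rfl⟩ := hdecomp i hi
      rw [hφ, ← hKsucc _ _ hj]
  · intro k
    ext i
    exact congrFun (huniq k.1 (fun i hi => by
      rw [← ((hcond k.1).mp k.2).2 _ (haddne i hi), hφ])).symm i
  · intro x
    ext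
    exact hK0 x.1
end

section
/- Let G be a finite group, φ ∈ Aut(G) of order m, G̃ = G ⋊ ⟨φ⟩, and V a G̃-module. For an irreducible character χ̃ of G̃, the Molien series satisfies P_{χ̃}^V(t) = (1/m) Σ_{i=0}^{m-1} Σ_{x ∈ H¹(G,φⁱ)} χ̃((x,φⁱ)⁻¹) / (|C_{G,φⁱ}(x)| · det_V(id_V − t·ρ(x,φⁱ))), where the inner sum runs over a set of representatives of the φⁱ-conjugacy classes of G. -/
open scoped BigOperators Polynomial

/-- The semidirect product `G̃ = G ⋊ ⟨φ⟩`. -/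
abbrev Gtilde (G : Type*) [Group G] (φ : MulAut G) :=
  G ⋊[(Subgroup.zpowers φ).subtype] ↥(Subgroup.zpowers φ)

/-- `φ` regarded as an element of `⟨φ⟩`. -/
def phiHat {G : Type*} [Group G] (φ : MulAut G) : ↥(Subgroup.zpowers φ) :=
  ⟨φ, Subgroup.mem_zpowers φ⟩

/-- The reciprocal characteristic power series `det(1 - t·M)⁻¹ ∈ ℂ[[t]]`. -/
noncomputable def invCharPoly {ι : Type*} [Fintype ι] [DecidableEq ι]
    (M : Matrix ι ι ℂ) : PowerSeries ℂ :=
  (((1 : Matrix ι ι ℂ[X]) - (Polynomial.X : ℂ[X]) • M.map Polynomial.C).det :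
      ℂ[X]).toPowerSeries⁻¹

/-- The Molien series `P_χ^V(t) = |G|⁻¹ Σ_g χ(g⁻¹)/det(1 - t·ρ(g))`. -/
noncomputable def molienSeries {G ι : Type*} [Group G] [Fintype G]
    [Fintype ι] [DecidableEq ι]
    (χ : G → ℂ) (ρ : G →* Matrix ι ι ℂ) : PowerSeries ℂ :=
  (Fintype.card G : ℂ)⁻¹ • ∑ g : G, χ g⁻¹ • invCharPoly (ρ g)

/-- `χ` is an irreducible character of the finite group `G`. -/
def IsIrredChar (G : Type*) [Group G] [Fintype G] (χ : G → ℂ) : Prop :=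
  (∃ (k : ℕ) (π : G →* Matrix (Fin k) (Fin k) ℂ), χ = fun s => (π s).trace) ∧
    (Fintype.card G : ℂ)⁻¹ * ∑ s : G, χ s * χ s⁻¹ = 1

/-! ### Auxiliary lemmas -/

open Finset

section twisted
variable {G : Type*} [Group G] [Fintype G] [DecidableEq G]

/-- Fibers of the twisted orbit map all have the cardinality of the twisted centralizer. -/
lemma tw_card_fiber (ψ : MulAut G) (x y z₀ : G) (h : y = z₀⁻¹ * x * ψ z₀) :
    (Finset.univ.filter fun z => z⁻¹ * x * ψ z = y).card
      = (Finset.univ.filter fun u => u⁻¹ * x * ψ u = x).card := by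
  apply Finset.card_nbij' (fun z => z * z₀⁻¹) (fun u => u * z₀)
  · intro z hz
    simp only [mem_coe, mem_filter, mem_univ, true_and] at hz ⊢
    have : (z * z₀⁻¹)⁻¹ * x * ψ (z * z₀⁻¹) = z₀ * (z⁻¹ * x * ψ z) * (ψ z₀)⁻¹ := by
      simp [map_mul, map_inv, mul_assoc]
    rw [this, hz, h]
    group
  · intro u hu
    simp only [mem_coe, mem_filter, mem_univ, true_and] at hu ⊢
    have : (u * z₀)⁻¹ * x * ψ (u * z₀) = z₀⁻¹ * (u⁻¹ * x * ψ u) * ψ z₀ := by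
      simp [map_mul, mul_assoc]
    rw [this, hu, h]
  · intro z _; simp
  · intro u _; simp

/-- Twisted orbit–stabilizer: |class(x)| · |C(x)| = |G|. -/
lemma tw_card_class_mul (ψ : MulAut G) (x : G) :
    ((Finset.univ.filter fun y => ∃ z : G, y = z⁻¹ * x * ψ z).card) *
      (Finset.univ.filter fun u => u⁻¹ * x * ψ u = x).card = Fintype.card G := by
  classical
  have key : (Finset.univ : Finset G).card =
      ∑ y ∈ (Finset.univ.filter fun y => ∃ z : G, y = z⁻¹ * x * ψ z),
        (Finset.univ.filter fun z => z⁻¹ * x * ψ z = y).card := by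
    apply Finset.card_eq_sum_card_fiberwise
    intro z _
    simp only [mem_filter, mem_univ, true_and]
    exact Finset.mem_filter.2 ⟨Finset.mem_univ _, z, rfl⟩
  rw [Finset.card_univ] at key
  rw [key, Finset.sum_congr rfl, Finset.sum_const, smul_eq_mul]
  intro y hy
  simp only [mem_filter, mem_univ, true_and] at hy
  obtain ⟨z₀, hz₀⟩ := hy
  exact tw_card_fiber ψ x y z₀ hz₀

/-- A sum over `G` of a twisted class function collapses to representatives. -/
lemma tw_sum_class (ψ : MulAut G) (Ri : Finset G)
    (hR : ∀ y : G, ∃! x : G, x ∈ Ri ∧ ∃ z : G, y = z⁻¹ * x * ψ z)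
    {M : Type*} [AddCommMonoid M] (f : G → M)
    (hf : ∀ x z : G, f (z⁻¹ * x * ψ z) = f x) :
    ∑ y : G, f y = ∑ x ∈ Ri,
      ((Finset.univ.filter fun y => ∃ z : G, y = z⁻¹ * x * ψ z).card) • f x := by
  classical
  have hrex : ∀ y : G, ∃ x : G, x ∈ Ri ∧ ∃ z : G, y = z⁻¹ * x * ψ z := fun y => (hR y).exists
  set r : G → G := fun y => (hrex y).choose with hr
  have hrspec : ∀ y : G, r y ∈ Ri ∧ ∃ z : G, y = z⁻¹ * (r y) * ψ z := fun y => (hrex y).choose_spec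
  rw [← Finset.sum_fiberwise_of_maps_to (g := r) (fun y _ => (hrspec y).1) f]
  apply Finset.sum_congr rfl
  intro x hx
  have hfib : ∀ y ∈ Finset.univ.filter (fun y => r y = x), f y = f x := by
    intro y hy
    simp only [mem_filter, mem_univ, true_and] at hy
    obtain ⟨-, z, hz⟩ := hrspec y
    rw [hy] at hz
    rw [hz, hf]
  rw [Finset.sum_congr rfl hfib, Finset.sum_const]
  congr 2
  ext y
  simp only [mem_filter, mem_univ, true_and]
  constructor
  · intro hy
    obtain ⟨-, z, hz⟩ := hrspec y
    rw [hy] at hz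
    exact ⟨z, hz⟩
  · intro hy
    exact (hR y).unique (hrspec y) ⟨hx, hy⟩

end twisted

/-- `invCharPoly ∘ ρ` is a class function. -/
lemma invCharPoly_conj {ι H : Type*} [Fintype ι] [DecidableEq ι] [Group H]
    (ρ : H →* Matrix ι ι ℂ) (h g : H) :
    invCharPoly (ρ (h * g * h⁻¹)) = invCharPoly (ρ g) := by
  unfold invCharPoly
  congr 2
  set C := (Polynomial.C : ℂ →+* ℂ[X])
  set P := (ρ h).map C
  set P' := (ρ h⁻¹).map C
  set Q := (ρ g).map C
  have hPP' : P * P' = 1 := by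
    rw [← Matrix.map_mul, ← map_mul, mul_inv_cancel, map_one,
      Matrix.map_one C (map_zero C) (map_one C)]
  have hP'P : P' * P = 1 := by
    rw [← Matrix.map_mul, ← map_mul, inv_mul_cancel, map_one,
      Matrix.map_one C (map_zero C) (map_one C)]
  have hmap : (ρ (h * g * h⁻¹)).map C = P * Q * P' := by
    rw [map_mul, map_mul, Matrix.map_mul, Matrix.map_mul]
  rw [hmap]
  have key : (1 : Matrix ι ι ℂ[X]) - (Polynomial.X : ℂ[X]) • (P * Q * P')
      = P * ((1 : Matrix ι ι ℂ[X]) - (Polynomial.X : ℂ[X]) • Q) * P' := by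
    rw [mul_sub, sub_mul, mul_one, hPP']
    congr 1
    rw [mul_smul_comm, smul_mul_assoc, mul_assoc]
  rw [key, Matrix.det_mul, Matrix.det_mul, mul_comm, ← mul_assoc, ← Matrix.det_mul, hP'P,
    Matrix.det_one, one_mul]

section sdp
variable {G : Type*} [Group G] (φ : MulAut G)

/-- `G̃` is in bijection with `⟨φ⟩ × G`. -/
def sdpEquiv : Gtilde G φ ≃ ↥(Subgroup.zpowers φ) × G where
  toFun g := (g.right, g.left)
  invFun p := ⟨p.2, p.1⟩
  left_inv _ := rfl
  right_inv _ := rfl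

/-- A sum over `⟨φ⟩` is a sum over the powers `φ^i`, `i < m`. -/
lemma zsum {M : Type*} [AddCommMonoid M] (m : ℕ) (hm : orderOf φ = m) (hm0 : 0 < m)
    [Fintype ↥(Subgroup.zpowers φ)] (g : ↥(Subgroup.zpowers φ) → M) :
    ∑ n : ↥(Subgroup.zpowers φ), g n = ∑ i ∈ Finset.range m, g (phiHat φ ^ i) := by
  have hfin : IsOfFinOrder φ := by rw [← orderOf_pos_iff, hm]; exact hm0
  have hfe : ∀ j : Fin (orderOf φ), (finEquivZPowers hfin j : MulAut G) = φ ^ (j:ℕ) :=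
    fun j => congrArg Subtype.val (finEquivZPowers_apply (x := φ) hfin (n := j))
  have hbij : Function.Bijective
      (fun j : Fin (orderOf φ) => (phiHat φ ^ (j:ℕ) : ↥(Subgroup.zpowers φ))) := by
    have heq : (fun j : Fin (orderOf φ) => (phiHat φ ^ (j:ℕ) : ↥(Subgroup.zpowers φ)))
        = fun j => finEquivZPowers hfin j := by
      funext j
      apply Subtype.ext
      rw [hfe j, SubmonoidClass.coe_pow]
      rfl
    rw [heq]
    exact (finEquivZPowers hfin).bijective
  rw [← Fintype.sum_bijective _ hbij (fun j => g (phiHat φ ^ (j:ℕ))) g (fun j => rfl)]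
  rw [Fin.sum_univ_eq_sum_range (fun i => g (phiHat φ ^ i)), hm]

lemma card_gtilde [Fintype G] [Fintype (Gtilde G φ)] (m : ℕ) (hm : orderOf φ = m) :
    Fintype.card (Gtilde G φ) = Fintype.card G * m := by
  have h1 : Nat.card (Gtilde G φ) = Nat.card (↥(Subgroup.zpowers φ) × G) :=
    Nat.card_congr (sdpEquiv φ)
  rw [Nat.card_eq_fintype_card] at h1
  rw [h1, Nat.card_prod, Nat.card_zpowers, hm, Nat.card_eq_fintype_card, mul_comm]

/-- The element `(z⁻¹·x·φⁱ(z), φⁱ)` is conjugate to `(x, φⁱ)` in `G̃`. -/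
lemma conj_elem (i : ℕ) (x z : G) :
    (⟨z⁻¹ * x * (φ ^ i) z, phiHat φ ^ i⟩ : Gtilde G φ)
      = (SemidirectProduct.inl z⁻¹) * ⟨x, phiHat φ ^ i⟩ * (SemidirectProduct.inl z⁻¹)⁻¹ := by
  have hcoe : ((phiHat φ ^ i : ↥(Subgroup.zpowers φ)) : MulAut G) = φ ^ i := by
    rw [SubmonoidClass.coe_pow]; rfl
  have h1 : (SemidirectProduct.inl (φ := (Subgroup.zpowers φ).subtype) z⁻¹)⁻¹
      = SemidirectProduct.inl z := by
    rw [← map_inv, inv_inv]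
  rw [h1]
  ext
  · simp [SemidirectProduct.mul_left, SemidirectProduct.mul_right,
      SemidirectProduct.left_inl, SemidirectProduct.right_inl, hcoe, mul_assoc,
      ← map_pow, SemidirectProduct.left_inr, SemidirectProduct.right_inr]
  · simp [SemidirectProduct.mul_left, SemidirectProduct.mul_right,
      SemidirectProduct.right_inl, ← map_pow, SemidirectProduct.right_inr,
      SubmonoidClass.coe_pow]

end sdp

/-- the Molien series of an irreducible character `χ̃` of
`G̃ = G ⋊ ⟨φ⟩` (with `φ` of order `m`) decomposes along the cosets `G.φⁱ` as
`P_{χ̃}^V(t) = m⁻¹ Σ_{i<m} Σ_{x ∈ H¹(G,φⁱ)} χ̃((x,φⁱ)⁻¹)/(|C_{G,φⁱ}(x)|·det(1−tρ(x,φⁱ)))`,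
where for each `i` the finite set `R i` is a set of representatives for the
φⁱ-conjugacy classes of `G`. -/
theorem molienSeries_coset_decomposition {G ι : Type*} [Group G] [Fintype G]
    [Fintype ι] [DecidableEq ι]
    (φ : MulAut G) [Fintype (Gtilde G φ)]
    (m : ℕ) (hm : orderOf φ = m) (hm0 : 0 < m)
    (cht : Gtilde G φ → ℂ) (hcht : IsIrredChar (Gtilde G φ) cht)
    (ρ : Gtilde G φ →* Matrix ι ι ℂ)
    (R : ℕ → Finset G)
    (hR : ∀ i < m, ∀ y : G, ∃! x : G, x ∈ R i ∧ ∃ z : G, y = z⁻¹ * x * (φ ^ i) z) :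
    molienSeries cht ρ =
      (m : ℂ)⁻¹ • ∑ i ∈ Finset.range m, ∑ x ∈ R i,
        (cht ((⟨x, phiHat φ ^ i⟩ : Gtilde G φ)⁻¹) *
            (Nat.card {g : G // g⁻¹ * x * (φ ^ i) g = x} : ℂ)⁻¹) •
          invCharPoly (ρ ⟨x, phiHat φ ^ i⟩) := by
  classical
  obtain ⟨⟨k, π, hπ⟩, -⟩ := hcht
  have hclass : ∀ h g : Gtilde G φ, cht (h * g * h⁻¹) = cht g := by
    intro h g
    rw [hπ]
    show (π (h * g * h⁻¹)).trace = (π g).trace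
    rw [map_mul, map_mul, Matrix.trace_mul_cycle, ← map_mul, inv_mul_cancel, map_one, one_mul]
  have hFconj : ∀ h g : Gtilde G φ,
      cht ((h * g * h⁻¹)⁻¹) • invCharPoly (ρ (h * g * h⁻¹))
        = cht g⁻¹ • invCharPoly (ρ g) := by
    intro h g
    rw [invCharPoly_conj ρ h g]
    congr 1
    have h2 : (h * g * h⁻¹)⁻¹ = h * g⁻¹ * h⁻¹ := by group
    rw [h2, hclass]
  have hfin : IsOfFinOrder φ := by rw [← orderOf_pos_iff, hm]; exact hm0
  haveI : Fintype ↥(Subgroup.zpowers φ) := hfin.finite_zpowers.fintype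
  have step1 : ∑ g : Gtilde G φ, cht g⁻¹ • invCharPoly (ρ g)
      = ∑ i ∈ Finset.range m, ∑ a : G,
          cht ((⟨a, phiHat φ ^ i⟩ : Gtilde G φ)⁻¹) • invCharPoly (ρ ⟨a, phiHat φ ^ i⟩) := by
    rw [Fintype.sum_equiv (sdpEquiv φ)
      (fun g => cht g⁻¹ • invCharPoly (ρ g))
      (fun p => cht ((⟨p.2, p.1⟩ : Gtilde G φ)⁻¹) • invCharPoly (ρ ⟨p.2, p.1⟩))
      (fun g => rfl)]
    rw [Fintype.sum_prod_type]
    exact zsum φ m hm hm0 _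
  have step2 : ∀ i ∈ Finset.range m, ∑ a : G,
      cht ((⟨a, phiHat φ ^ i⟩ : Gtilde G φ)⁻¹) • invCharPoly (ρ ⟨a, phiHat φ ^ i⟩)
      = ∑ x ∈ R i,
          ((Finset.univ.filter fun y => ∃ z : G, y = z⁻¹ * x * (φ ^ i) z).card) •
          (cht ((⟨x, phiHat φ ^ i⟩ : Gtilde G φ)⁻¹) • invCharPoly (ρ ⟨x, phiHat φ ^ i⟩)) := by
    intro i hi
    refine tw_sum_class (φ ^ i) (R i) (hR i (Finset.mem_range.1 hi))
      (fun a => cht ((⟨a, phiHat φ ^ i⟩ : Gtilde G φ)⁻¹) • invCharPoly (ρ ⟨a, phiHat φ ^ i⟩))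
      (fun x z => ?_)
    beta_reduce
    rw [conj_elem φ i x z]
    exact hFconj _ _
  unfold molienSeries
  rw [step1, Finset.sum_congr rfl step2, card_gtilde φ m hm]
  rw [Finset.smul_sum, Finset.smul_sum]
  refine Finset.sum_congr rfl fun i hi => ?_
  rw [Finset.smul_sum, Finset.smul_sum]
  refine Finset.sum_congr rfl fun x hx => ?_
  -- pointwise scalar identity
  set c := (Finset.univ.filter fun y => ∃ z : G, y = z⁻¹ * x * (φ ^ i) z).card with hc
  set s := (Finset.univ.filter fun u => u⁻¹ * x * (φ ^ i) u = x).card with hsdef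
  have hs : (Nat.card {g : G // g⁻¹ * x * (φ ^ i) g = x}) = s := by
    rw [Nat.card_eq_fintype_card, Fintype.card_subtype]
  have hrel : c * s = Fintype.card G := tw_card_class_mul (φ ^ i) x
  have hs0 : s ≠ 0 := by
    rw [hsdef]
    refine Finset.card_ne_zero_of_mem (a := 1) ?_
    simp
  have hm0' : (m : ℂ) ≠ 0 := Nat.cast_ne_zero.2 hm0.ne'
  have hG0 : (Fintype.card G : ℂ) ≠ 0 := Nat.cast_ne_zero.2 Fintype.card_ne_zero
  have hs0' : (s : ℂ) ≠ 0 := Nat.cast_ne_zero.2 hs0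
  have hcast : (c : ℂ) * (s : ℂ) = (Fintype.card G : ℂ) := by exact_mod_cast hrel
  rw [hs, ← Nat.cast_smul_eq_nsmul ℂ c, smul_smul, smul_smul, smul_smul]
  congr 1
  generalize cht ((⟨x, phiHat φ ^ i⟩ : Gtilde G φ)⁻¹) = v
  push_cast
  field_simp
  linear_combination v * hcast
end

section
/- Let G = G₁ × ⋯ × Gₙ with cyclic-permutation automorphism φ built from isomorphisms φᵢ : Gᵢ → G_{i+1}, and let V = V₁ ⊕ ⋯ ⊕ Vₙ be a G-module where Gᵢ acts faithfully-nontrivially only on Vᵢ (V = Vᵢ ⊕ Fix_{Gᵢ}(V)), equipped with a compatible linear map σ cyclically permuting the summands as in the paper. For x ∈ G₁ and x̄ = (x,1,…,1), the characteristic-polynomial identity det_V(id_V − t·ρ(x̄,φ)) = det_{V₁}(id_{V₁} − tⁿ·ρ₁(x, ψ₁)) holds, where ψ₁ is the composite automorphism of G₁ and ρ₁(x,ψ₁) = ρ₁(x)∘τ₁ with τ₁ the induced twisting map on V₁. -/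
open scoped BigOperators Polynomial

section CharpolyCyclicAux

open Matrix Polynomial
open Fin.NatCast Fin.CommRing

variable {n m : ℕ} [NeZero n] {R : Type*} [CommRing R]

def shiftBlk (B : Fin n → Matrix (Fin m) (Fin m) R) :
    Matrix (Fin m × Fin n) (Fin m × Fin n) R :=
  Matrix.of fun q r => if q.2 = r.2 + 1 then B r.2 q.1 r.1 else 0

def cycProd (B : Fin n → Matrix (Fin m) (Fin m) R) : ℕ → Fin n → Matrix (Fin m) (Fin m) R
  | 0, _ => 1
  | (k+1), j => cycProd B k (j+1) * B j

lemma shiftBlk_pow (B : Fin n → Matrix (Fin m) (Fin m) R) (k : ℕ) :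
    shiftBlk B ^ k = Matrix.of fun q r =>
      if q.2 = r.2 + (k : Fin n) then cycProd B k r.2 q.1 r.1 else 0 := by
  induction k with
  | zero =>
    ext q r
    simp only [pow_zero, Matrix.one_apply, Nat.cast_zero, add_zero, cycProd, Matrix.of_apply]
    by_cases h2 : q.2 = r.2
    · by_cases h1 : q.1 = r.1
      · simp [h1, h2, Prod.ext_iff, Matrix.one_apply]
      · simp [h1, h2, Prod.ext_iff, Matrix.one_apply]
    · simp [h2, Prod.ext_iff]
  | succ k ih =>
    ext q r
    rw [pow_succ, ih, Matrix.mul_apply]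
    simp only [shiftBlk, Matrix.of_apply]
    rw [Fintype.sum_prod_type]
    simp only [mul_ite, mul_zero, Finset.sum_ite_eq', Finset.mem_univ, if_true]
    have hc : r.2 + 1 + (k : Fin n) = r.2 + (((k : ℕ) + 1 : ℕ) : Fin n) := by push_cast; ring
    rw [hc, cycProd]
    split_ifs with h
    · rw [Matrix.mul_apply]
    · simp

lemma cycProd_add (B : Fin n → Matrix (Fin m) (Fin m) R) (a b : ℕ) (j : Fin n) :
    cycProd B (a + b) j = cycProd B a (j + (b : Fin n)) * cycProd B b j := by
  induction b generalizing j with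
  | zero => simp [cycProd]
  | succ b ih =>
    rw [show a + (b + 1) = (a + b) + 1 from rfl, cycProd, ih, cycProd, mul_assoc]
    congr 2
    push_cast
    ring

lemma shiftBlk_pow_n (B : Fin n → Matrix (Fin m) (Fin m) R) :
    shiftBlk B ^ n = Matrix.blockDiagonal fun i => cycProd B n i := by
  rw [shiftBlk_pow, Fin.natCast_self]
  ext q r
  simp only [Matrix.of_apply, add_zero, Matrix.blockDiagonal_apply]
  by_cases h : q.2 = r.2
  · rw [if_pos h, if_pos h, h]
  · rw [if_neg h, if_neg h]

lemma det_one_sub_cycProd (B : Fin n → Matrix (Fin m) (Fin m) R) (i : Fin n) :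
    (1 - cycProd B n i).det = (1 - cycProd B n 0).det := by
  have h2 : (((i : ℕ) : ℕ) : Fin n) = i := Fin.cast_val_eq_self i
  have h3 : i + ((n - (i : ℕ) : ℕ) : Fin n) = 0 := by
    have h4 : (((i : ℕ) : ℕ) : Fin n) + ((n - (i : ℕ) : ℕ) : Fin n) = 0 := by
      rw [← Nat.cast_add, show (i : ℕ) + (n - (i : ℕ)) = n from by omega, Fin.natCast_self]
    rwa [h2] at h4
  have e1 := cycProd_add B (i : ℕ) (n - (i : ℕ)) i
  rw [show (i : ℕ) + (n - (i : ℕ)) = n from by omega, h3] at e1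
  have e2 := cycProd_add B (n - (i : ℕ)) (i : ℕ) 0
  rw [show (n - (i : ℕ)) + (i : ℕ) = n from by omega, zero_add, h2] at e2
  rw [e1, e2, Matrix.det_one_sub_mul_comm]

lemma cycProd_eq_list (B : Fin n → Matrix (Fin m) (Fin m) R) (k : ℕ) (j : Fin n) :
    cycProd B k j = (List.ofFn fun l : Fin k => B (j + ((l : ℕ) : Fin n))).reverse.prod := by
  induction k generalizing j with
  | zero => simp [cycProd]
  | succ k ih =>
    rw [cycProd, ih, List.ofFn_succ, List.reverse_cons, List.prod_append, List.prod_cons,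
      List.prod_nil, mul_one]
    have hfun : (fun l : Fin k => B (j + 1 + ((l : ℕ) : Fin n)))
        = fun l : Fin k => B (j + (((Fin.succ l : Fin (k+1)) : ℕ) : Fin n)) := by
      funext l
      congr 1
      rw [Fin.val_succ]
      push_cast
      ring
    rw [hfun]
    congr 1
    simp

lemma cycProd_n_zero (B : Fin n → Matrix (Fin m) (Fin m) R) :
    cycProd B n 0 = (List.ofFn B).reverse.prod := by
  rw [cycProd_eq_list]
  have hfun : (fun l : Fin n => B (0 + ((l : ℕ) : Fin n))) = B := by
    funext l
    rw [zero_add, Fin.cast_val_eq_self]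
  rw [hfun]

lemma det_one_sub_smul_shiftBlk (ζ : ℂ) (hζ : ζ ^ n = 1)
    (Bp : Fin n → Matrix (Fin m) (Fin m) ℂ[X]) :
    (1 - (Polynomial.C ζ) • shiftBlk Bp).det = (1 - shiftBlk Bp).det := by
  have hζ0 : ζ ≠ 0 := by
    intro h
    rw [h, zero_pow (NeZero.ne n)] at hζ
    exact zero_ne_one hζ
  set E : Matrix (Fin m × Fin n) (Fin m × Fin n) ℂ[X] :=
    Matrix.diagonal fun q => (Polynomial.C ζ⁻¹) ^ (q.2 : ℕ) with hE
  set E' : Matrix (Fin m × Fin n) (Fin m × Fin n) ℂ[X] :=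
    Matrix.diagonal fun q => (Polynomial.C ζ) ^ (q.2 : ℕ) with hE'
  have hEE' : E * E' = 1 := by
    rw [hE, hE', Matrix.diagonal_mul_diagonal]
    convert Matrix.diagonal_one
    rw [← mul_pow, ← Polynomial.C_mul, inv_mul_cancel₀ hζ0]
    simp
  have hconj : E * (1 - (Polynomial.C ζ) • shiftBlk Bp) * E' = 1 - shiftBlk Bp := by
    rw [Matrix.mul_sub, Matrix.sub_mul, Matrix.mul_one, hEE']
    refine congrArg (fun M => 1 - M) ?_
    refine Matrix.ext fun q r => ?_
    rw [hE, hE', Matrix.mul_diagonal, Matrix.diagonal_mul]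
    simp only [Matrix.smul_apply, shiftBlk, Matrix.of_apply, smul_eq_mul]
    split_ifs with h
    · have h' : (q.2 : ℕ) = ((r.2 : ℕ) + 1 % n) % n := by
        have h'' := congrArg Fin.val h
        simp only [Fin.add_def, Fin.val_one'] at h''
        exact h''
      have hp : ∀ a : ℕ, ζ ^ a = ζ ^ (a % n) := by
        intro a
        conv_lhs => rw [← Nat.mod_add_div a n]
        rw [pow_add, pow_mul, hζ, one_pow, mul_one]
      have key : ζ⁻¹ ^ ((q.2 : ℕ)) * (ζ * ζ ^ ((r.2 : ℕ))) = 1 := by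
        have hzq : ζ ^ ((q.2 : ℕ)) = ζ * ζ ^ ((r.2 : ℕ)) := by
          rw [h', ← hp, pow_add, ← hp, pow_one, mul_comm]
        rw [← hzq, ← mul_pow, inv_mul_cancel₀ hζ0, one_pow]
      have keyC : (Polynomial.C ζ⁻¹) ^ ((q.2 : ℕ)) * (Polynomial.C ζ * (Polynomial.C ζ) ^ ((r.2 : ℕ))) = 1 := by
        rw [← map_pow, ← map_pow, ← _root_.map_mul, ← _root_.map_mul, key, Polynomial.C_1]
      calc (Polynomial.C ζ⁻¹) ^ ((q.2 : ℕ)) * (Polynomial.C ζ * Bp r.2 q.1 r.1) * (Polynomial.C ζ) ^ ((r.2 : ℕ))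
          = ((Polynomial.C ζ⁻¹) ^ ((q.2 : ℕ)) * (Polynomial.C ζ * (Polynomial.C ζ) ^ ((r.2 : ℕ)))) * Bp r.2 q.1 r.1 := by ring
        _ = Bp r.2 q.1 r.1 := by rw [keyC, one_mul]
    · ring
  have hdet := congrArg Matrix.det hconj
  rw [Matrix.det_mul, Matrix.det_mul] at hdet
  have hdetEE' : E.det * E'.det = 1 := by
    rw [← Matrix.det_mul, hEE', Matrix.det_one]
  calc (1 - (Polynomial.C ζ) • shiftBlk Bp).det
      = (E.det * E'.det) * (1 - (Polynomial.C ζ) • shiftBlk Bp).det := by rw [hdetEE', one_mul]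
    _ = (1 - shiftBlk Bp).det := by rw [← hdet]; ring

lemma prod_one_sub_C_mul_X :
    (((Polynomial.nthRoots n (1:ℂ)).map fun ζ => 1 - Polynomial.C ζ * Polynomial.X).prod : ℂ[X])
      = 1 - Polynomial.X ^ n := by
  have hn : n ≠ 0 := NeZero.ne n
  have hprim := Complex.isPrimitiveRoot_exp n hn
  have hcard : Multiset.card (nthRoots n (1:ℂ)) = n := hprim.card_nthRoots_one
  have hmonic : ((X : ℂ[X]) ^ n - C (1:ℂ)).Monic := monic_X_pow_sub_C _ hn
  have hroots : ((X : ℂ[X]) ^ n - C (1:ℂ)).roots = nthRoots n 1 := rfl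
  have hsplit : ((nthRoots n (1:ℂ)).map fun ζ => (X : ℂ[X]) - C ζ).prod = X ^ n - C 1 := by
    have h := prod_multiset_X_sub_C_of_monic_of_roots_card_eq hmonic
      (by rw [hroots, hcard, natDegree_X_pow_sub_C])
    rw [hroots] at h
    exact h
  apply Polynomial.funext
  intro s
  rw [eval_multiset_prod, Multiset.map_map]
  by_cases hs : s = 0
  · subst hs
    simp [zero_pow (NeZero.ne n)]
  · calc ((nthRoots n (1:ℂ)).map (Polynomial.eval s ∘ fun ζ => 1 - C ζ * X)).prod
        = ((nthRoots n (1:ℂ)).map fun ζ => s * (s⁻¹ - ζ)).prod := by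
          congr 1
          apply Multiset.map_congr rfl
          intro ζ _
          simp only [Function.comp_apply, eval_sub, eval_one, eval_mul, eval_C, eval_X]
          rw [mul_sub, mul_inv_cancel₀ hs]
          ring
      _ = s ^ n * ((nthRoots n (1:ℂ)).map fun ζ => s⁻¹ - ζ).prod := by
          rw [Multiset.prod_map_mul]
          congr 1
          simp [Multiset.map_const', hcard]
      _ = s ^ n * Polynomial.eval s⁻¹ (((nthRoots n (1:ℂ)).map fun ζ => (X:ℂ[X]) - C ζ).prod) := by
          rw [eval_multiset_prod, Multiset.map_map]
          simp
      _ = s ^ n * (s⁻¹ ^ n - 1) := by rw [hsplit]; simp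
      _ = Polynomial.eval s (1 - X ^ n) := by
          rw [mul_sub, ← mul_pow, mul_inv_cancel₀ hs, one_pow, mul_one]
          simp

lemma det_one_sub_pow_shiftBlk (Bp : Fin n → Matrix (Fin m) (Fin m) ℂ[X]) :
    (1 - shiftBlk Bp ^ n).det = (1 - shiftBlk Bp).det ^ n := by
  have hn : n ≠ 0 := NeZero.ne n
  set N := shiftBlk Bp with hN
  set l := (Polynomial.nthRoots n (1:ℂ)).toList with hl
  have hlen : l.length = n := by
    rw [hl, Multiset.length_toList, (Complex.isPrimitiveRoot_exp n hn).card_nthRoots_one]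
  have hprodl : ((l.map fun ζ => (1 : ℂ[X]) - Polynomial.C ζ * Polynomial.X).prod)
      = 1 - Polynomial.X ^ n := by
    have h0 := prod_one_sub_C_mul_X (n := n)
    rw [← Multiset.coe_toList (Polynomial.nthRoots n (1:ℂ)), Multiset.map_coe,
      Multiset.prod_coe] at h0
    exact h0
  have h2 := congrArg (Polynomial.aeval N) hprodl
  rw [map_list_prod, List.map_map] at h2
  rw [map_sub, _root_.map_one, map_pow, Polynomial.aeval_X] at h2
  have h3 : ∀ ζ : ℂ, (Polynomial.aeval N) ((1 : ℂ[X]) - Polynomial.C ζ * Polynomial.X)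
      = 1 - Polynomial.C ζ • N := by
    intro ζ
    rw [map_sub, _root_.map_one, _root_.map_mul, Polynomial.aeval_X, Polynomial.aeval_C]
    congr 1
    refine Matrix.ext fun q r => ?_
    rw [Matrix.algebraMap_eq_diagonal, Matrix.diagonal_mul, Matrix.smul_apply, smul_eq_mul]
    simp [Polynomial.algebraMap_eq]
  have h4 := congrArg Matrix.detMonoidHom h2
  rw [map_list_prod, List.map_map] at h4
  have h5 : (List.map (⇑Matrix.detMonoidHom ∘ ⇑(Polynomial.aeval N) ∘
      fun ζ => (1 : ℂ[X]) - Polynomial.C ζ * Polynomial.X) l)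
      = List.map (fun _ => (1 - N).det) l := by
    apply List.map_congr_left
    intro ζ hζl
    have hζ : ζ ^ n = 1 := by
      rw [hl] at hζl
      rw [Multiset.mem_toList] at hζl
      exact (Polynomial.mem_nthRoots (Nat.pos_of_ne_zero hn)).mp hζl
    simp only [Function.comp_apply, h3]
    show (1 - Polynomial.C ζ • N).det = (1 - N).det
    exact det_one_sub_smul_shiftBlk ζ hζ Bp
  rw [h5, List.map_const', List.prod_replicate, hlen] at h4
  have h6 : Matrix.detMonoidHom (1 - N ^ n) = (1 - N ^ n).det := rfl
  rw [h6] at h4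
  exact h4.symm

lemma eq_of_pow_eq_pow_of_eval_zero (f g : ℂ[X]) (hfg : f ^ n = g ^ n)
    (hf : f.eval 0 = 1) (hg : g.eval 0 = 1) : f = g := by
  have hn : n ≠ 0 := NeZero.ne n
  have hg0 : g ≠ 0 := fun h0 => by simp [h0] at hg
  have hdvd : g ∣ f := by
    have : g ^ n ∣ f ^ n := by rw [hfg]
    exact (IsIntegrallyClosed.pow_dvd_pow_iff hn).mp this
  obtain ⟨h, rfl⟩ := hdvd
  have hh : h ^ n = 1 := by
    have h1 : g ^ n * h ^ n = g ^ n * 1 := by rw [mul_one, ← mul_pow, hfg]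
    exact mul_left_cancel₀ (pow_ne_zero _ hg0) h1
  have hh0 : h.eval 0 = 1 := by
    rw [Polynomial.eval_mul, hg, one_mul] at hf
    exact hf
  have hu : IsUnit h := IsUnit.of_mul_eq_one (a := h) (h ^ (n - 1)) (by
    have hps : h * h ^ (n - 1) = h ^ n := by
      conv_rhs => rw [show n = (n - 1) + 1 by omega]
      rw [pow_succ']
    rw [hps]
    exact hh)
  obtain ⟨c, -, hch⟩ := Polynomial.isUnit_iff.mp hu
  rw [← hch, Polynomial.eval_C] at hh0
  rw [← hch, hh0, Polynomial.C_1, mul_one]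

lemma list_prod_smul_map (L : List (Matrix (Fin m) (Fin m) ℂ)) :
    (L.map fun A => (Polynomial.X : ℂ[X]) • A.map Polynomial.C).prod
      = (Polynomial.X : ℂ[X]) ^ L.length • (L.prod).map Polynomial.C := by
  induction L with
  | nil => simp
  | cons A L ih =>
    rw [List.map_cons, List.prod_cons, ih, List.prod_cons, List.length_cons,
      smul_mul_smul_comm, Matrix.map_mul]
    rw [pow_succ']

lemma reverse_prod_ofFn_mul {G : Type*} [Monoid G] (A : G) (S : Fin n → G) :
    (List.ofFn fun j : Fin n => if j + (1 : Fin n) = 0 then A * S j else S j).reverse.prod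
      = A * (List.ofFn S).reverse.prod := by
  obtain ⟨n', rfl⟩ : ∃ n', n = n' + 1 := ⟨n - 1, by have := NeZero.ne n; omega⟩
  rw [List.ofFn_succ' (f := fun j : Fin (n' + 1) => if j + 1 = 0 then A * S j else S j),
    List.ofFn_succ' (f := S)]
  rw [List.concat_eq_append, List.concat_eq_append, List.reverse_append, List.reverse_append]
  simp only [List.reverse_singleton, List.singleton_append, List.prod_cons]
  have hlast : (Fin.last n') + 1 = 0 := by
    rw [Fin.last_add_one]
  rw [if_pos hlast]
  have htail : (List.ofFn fun i : Fin n' =>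
      if (Fin.castSucc i) + 1 = 0 then A * S (Fin.castSucc i) else S (Fin.castSucc i))
      = List.ofFn fun i : Fin n' => S (Fin.castSucc i) := by
    congr 1
    funext i
    rw [if_neg]
    rw [Fin.coeSucc_eq_succ]
    exact Fin.succ_ne_zero i
  rw [htail, mul_assoc]

lemma key_det (B : Fin n → Matrix (Fin m) (Fin m) ℂ) :
    (1 - (Polynomial.X : ℂ[X]) • (shiftBlk B).map Polynomial.C).det
      = (1 - ((Polynomial.X : ℂ[X]) ^ n) • ((List.ofFn B).reverse.prod).map Polynomial.C).det := by
  have hn : n ≠ 0 := NeZero.ne n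
  set B' : Fin n → Matrix (Fin m) (Fin m) ℂ[X] :=
    fun j => (Polynomial.X : ℂ[X]) • (B j).map Polynomial.C with hB'
  have hN : (Polynomial.X : ℂ[X]) • (shiftBlk B).map Polynomial.C = shiftBlk B' := by
    refine Matrix.ext fun q r => ?_
    simp only [Matrix.smul_apply, Matrix.map_apply, shiftBlk, Matrix.of_apply, hB']
    split_ifs with h
    · simp
    · simp
  -- identification of the cyclic product
  have hcyc : cycProd B' n 0
      = ((Polynomial.X : ℂ[X]) ^ n) • ((List.ofFn B).reverse.prod).map Polynomial.C := by
    rw [cycProd_n_zero]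
    have h1 : List.ofFn B' = (List.ofFn B).map fun A => (Polynomial.X : ℂ[X]) • A.map Polynomial.C := by
      rw [List.map_ofFn]
      rfl
    rw [h1, ← List.map_reverse, list_prod_smul_map]
    rw [List.length_reverse, List.length_ofFn]
  -- power identity
  have hpow : (1 - shiftBlk B').det ^ n
      = (1 - cycProd B' n 0).det ^ n := by
    rw [← det_one_sub_pow_shiftBlk, shiftBlk_pow_n]
    rw [show (1 : Matrix (Fin m × Fin n) (Fin m × Fin n) ℂ[X])
          - Matrix.blockDiagonal (fun i => cycProd B' n i)
        = Matrix.blockDiagonal (fun i => 1 - cycProd B' n i) by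
      rw [← Matrix.blockDiagonal_one, ← Matrix.blockDiagonal_sub]
      rfl]
    rw [Matrix.det_blockDiagonal]
    rw [Finset.prod_congr rfl fun i _ => det_one_sub_cycProd B' i]
    rw [Finset.prod_const, Finset.card_univ, Fintype.card_fin]
  -- eval-at-zero facts
  have heval : ∀ (ι : Type) (_ : Fintype ι) (_ : DecidableEq ι) (M : Matrix ι ι ℂ[X]),
      (M.map (Polynomial.evalRingHom 0) = 0) → ((1 - M).det.eval 0 = 1) := by
    intro ι _ _ M hM
    have h1 : (1 - M).det.eval 0 = ((1 - M).map (Polynomial.evalRingHom 0)).det := by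
      rw [← Polynomial.coe_evalRingHom, RingHom.map_det, RingHom.mapMatrix_apply]
    rw [h1]
    rw [Matrix.map_sub _ (fun a b => by simp), Matrix.map_one _ (by simp) (by simp), hM,
      sub_zero, Matrix.det_one]
  have hf0 : (1 - shiftBlk B').det.eval 0 = 1 := by
    apply heval _ _ _
    refine Matrix.ext fun q r => ?_
    simp only [Matrix.map_apply, shiftBlk, Matrix.of_apply, hB', Matrix.smul_apply,
      Matrix.zero_apply, smul_eq_mul]
    split_ifs with h
    · simp
    · simp
  have hg0 : (1 - cycProd B' n 0).det.eval 0 = 1 := by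
    apply heval _ _ _
    rw [hcyc]
    refine Matrix.ext fun q r => ?_
    simp [zero_pow hn]
  rw [hN]
  rw [show ((Polynomial.X : ℂ[X]) ^ n) • ((List.ofFn B).reverse.prod).map Polynomial.C
      = cycProd B' n 0 from hcyc.symm]
  exact eq_of_pow_eq_pow_of_eval_zero _ _ hpow hf0 hg0

end CharpolyCyclicAux

/-- in the cyclic setting `G = G₁ × ⋯ × Gₙ`, `V = V₁ ⊕ ⋯ ⊕ Vₙ`
(each `Vᵢ` of dimension `m`, coordinates indexed by `Fin m × Fin n` with `Gᵢ`
acting block-diagonally only on `Vᵢ`, and the extended action of `(1,φ)` given by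
the cyclic shift built from the blocks `Sb i : Vᵢ → V_{i+1}` of `σ`), for `x ∈ G₁`
and `x̄ = (x,1,…,1)` one has
`det_V(1 − t·ρ(x̄,φ)) = det_{V₁}(1 − tⁿ·ρ₁(x)∘τ₁)` where
`τ₁ = σₙ⋯σ₁ = Sb_{n-1}⋯Sb_0` is the around-the-cycle composite on `V₁`. -/

theorem charpoly_cyclic_reduction {n m : ℕ} [NeZero n]
    (Gi : Fin n → Type*) [∀ i, Group (Gi i)] [∀ i, Fintype (Gi i)]
    (φi : ∀ i : Fin n, Gi i ≃* Gi (i + 1))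
    (φ : MulAut (∀ i, Gi i))
    (hφ : ∀ (g : ∀ i, Gi i) (i : Fin n), φ g (i + 1) = φi i (g i))
    (ψ₁ : MulAut (Gi 0))
    (hψ₁ : ∀ g : ∀ i, Gi i, (φ ^ n) g 0 = ψ₁ (g 0))
    [Fintype (Gtilde (∀ i, Gi i) φ)]
    (ρt : Gtilde (∀ i, Gi i) φ →* Matrix (Fin m × Fin n) (Fin m × Fin n) ℂ)
    (ρi : ∀ i : Fin n, Gi i → Matrix (Fin m) (Fin m) ℂ)
    (hinl : ∀ g : ∀ i, Gi i,
      ρt (SemidirectProduct.inl g) = Matrix.blockDiagonal (fun i => ρi i (g i)))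
    (Sb : Fin n → Matrix (Fin m) (Fin m) ℂ)
    (hS : ∀ q r : Fin m × Fin n,
      ρt ⟨1, phiHat φ⟩ q r = if q.2 = r.2 + 1 then Sb r.2 q.1 r.1 else 0)
    (x : Gi 0) :
    ((1 : Matrix (Fin m × Fin n) (Fin m × Fin n) ℂ[X]) -
        (Polynomial.X : ℂ[X]) •
          (ρt ⟨Pi.mulSingle 0 x, phiHat φ⟩).map Polynomial.C).det =
      ((1 : Matrix (Fin m) (Fin m) ℂ[X]) -
        ((Polynomial.X : ℂ[X]) ^ n) •
          (ρi 0 x * (List.ofFn Sb).reverse.prod).map Polynomial.C).det := by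
  -- the one-matrices of the blocks
  have hone : ∀ i : Fin n, ρi i 1 = 1 := by
    intro i
    have h1 : ρt (SemidirectProduct.inl 1) = 1 := by
      rw [_root_.map_one, _root_.map_one]
    rw [hinl] at h1
    refine Matrix.ext fun a b => ?_
    have h2 := congrFun (congrFun h1 (a, i)) (b, i)
    rw [Matrix.blockDiagonal_apply_eq] at h2
    calc ρi i 1 a b = ρi i ((1 : ∀ i, Gi i) i) a b := rfl
      _ = (1 : Matrix (Fin m × Fin n) (Fin m × Fin n) ℂ) (a, i) (b, i) := h2
      _ = (1 : Matrix (Fin m) (Fin m) ℂ) a b := by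
          by_cases hab : a = b <;> simp [Matrix.one_apply, hab, Prod.ext_iff]
  -- semidirect product decomposition
  have hsemi : (⟨Pi.mulSingle 0 x, phiHat φ⟩ : Gtilde (∀ i, Gi i) φ)
      = SemidirectProduct.inl (Pi.mulSingle 0 x) * ⟨1, phiHat φ⟩ := by
    ext <;> simp
  set Dfun : Fin n → Matrix (Fin m) (Fin m) ℂ := fun i => ρi i (Pi.mulSingle 0 x i) with hDfun
  set Bc : Fin n → Matrix (Fin m) (Fin m) ℂ := fun j => Dfun (j + 1) * Sb j with hBc
  have hM : ρt ⟨Pi.mulSingle 0 x, phiHat φ⟩ = shiftBlk Bc := by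
    rw [hsemi, _root_.map_mul, hinl]
    refine Matrix.ext fun q r => ?_
    rw [Matrix.mul_apply, Fintype.sum_prod_type]
    simp only [Matrix.blockDiagonal_apply, hS, mul_ite, mul_zero, Finset.sum_ite_eq',
      Finset.mem_univ, if_true]
    simp only [shiftBlk, Matrix.of_apply, hBc]
    split_ifs with h
    · rw [Matrix.mul_apply]
      refine Finset.sum_congr rfl fun p1 _ => ?_
      simp only [hDfun]
      rw [← h]
    · simp
  rw [hM, key_det]
  congr 3
  have hBc' : Bc = fun j : Fin n =>
      if j + (1 : Fin n) = 0 then (ρi 0 x) * Sb j else Sb j := by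
    funext j
    simp only [hBc, hDfun]
    by_cases hj : j + (1 : Fin n) = 0
    · rw [if_pos hj, hj, Pi.mulSingle_eq_same]
    · rw [if_neg hj, Pi.mulSingle_eq_of_ne hj, hone, one_mul]
  rw [hBc', reverse_prod_ofFn_mul]
end

section
/- Let A and B be m×m matrices over a commutative ring and t a scalar (or indeterminate). Consider the nm×nm block matrix M with identity blocks I_m on the diagonal, block −t·AB in position (1,2), blocks −t·B in positions (2,3), (3,4), …, (n−1,n), block −t·B in position (n,1), and zeros elsewhere. Then det(M) = det(I_m − tⁿ·A Bⁿ). -/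
open Matrix Finset

namespace DetCyclicAux

variable {R : Type*} [CommRing R] {n m : ℕ} [NeZero n]

/-- The superdiagonal block. -/
def Cb (A B : Matrix (Fin m) (Fin m) R) (t : R) (p : Fin n) : Matrix (Fin m) (Fin m) R :=
  if p = 0 then -(t • (A * B)) else -(t • B)

/-- Unipotent block-upper-triangular factor. -/
def Ublk (A B : Matrix (Fin m) (Fin m) R) (t : R) :
    Matrix (Fin n) (Fin n) (Matrix (Fin m) (Fin m) R) :=
  fun p q => if q = p then 1 else if (q : ℕ) = (p : ℕ) + 1 then Cb A B t p else 0

/-- Block-lower-triangular factor. -/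
def Lblk (A B : Matrix (Fin m) (Fin m) R) (t : R) :
    Matrix (Fin n) (Fin n) (Matrix (Fin m) (Fin m) R) :=
  fun p q =>
    if q = p then (if p = 0 then (1 - t ^ n • (A * B ^ n)) else 1)
    else if q = 0 then -(t ^ (n - (p : ℕ)) • B ^ (n - (p : ℕ))) else 0

/-- The cyclic block matrix, at block level. -/
def Mblk (A B : Matrix (Fin m) (Fin m) R) (t : R) :
    Matrix (Fin n) (Fin n) (Matrix (Fin m) (Fin m) R) :=
  fun p q => if q = p then 1 else if q = p + 1 then Cb A B t p else 0

theorem mul_eq (hn : 2 ≤ n) (A B : Matrix (Fin m) (Fin m) R) (t : R) :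
    Ublk (n := n) A B t * Lblk (n := n) A B t = Mblk (n := n) A B t := by
  have key : ∀ (a b : R) (X Y : Matrix (Fin m) (Fin m) R),
      (-(a • X)) * (-(b • Y)) = (a * b) • (X * Y) := by
    intros a b X Y
    rw [neg_mul_neg, smul_mul_assoc, mul_smul_comm, smul_smul]
  have h1 : ((1 : Fin n) : ℕ) = 1 := by
    rw [Fin.val_one']
    exact Nat.mod_eq_of_lt hn
  funext p q
  rw [Matrix.mul_apply]
  by_cases hp : (p : ℕ) + 1 < n
  · set p' : Fin n := ⟨(p : ℕ) + 1, hp⟩ with hp'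
    have hpadd : p + 1 = p' := by
      apply Fin.ext
      rw [Fin.val_add, h1]
      exact Nat.mod_eq_of_lt hp
    have hp'n0 : p' ≠ 0 := by
      intro h
      have := congrArg Fin.val h
      simp [hp'] at this
    have hp'np : p' ≠ p := by
      intro h
      have := congrArg Fin.val h
      simp [hp'] at this
    have step : ∀ r : Fin n, Ublk A B t p r * Lblk A B t r q
        = (if r = p then Lblk A B t p q else 0)
          + (if r = p' then Cb A B t p * Lblk A B t p' q else 0) := by
      intro r
      by_cases h1r : r = p
      · subst h1r
        have hU : Ublk A B t r r = 1 := by simp [Ublk]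
        have hne : r ≠ p' := fun h => hp'np h.symm
        rw [hU, one_mul, if_pos rfl, if_neg hne, add_zero]
      · by_cases h2r : r = p'
        · subst h2r
          have hU : Ublk A B t p p' = Cb A B t p := by
            have hne2 : (⟨(p : ℕ) + 1, hp⟩ : Fin n) ≠ p := hp'np
            simp [Ublk, hp'np, hp', hne2]
          rw [hU, if_neg h1r, if_pos rfl, zero_add]
        · have hU : Ublk A B t p r = 0 := by
            have hv : ¬((r : ℕ) = (p : ℕ) + 1) := fun h => h2r (Fin.ext h)
            simp [Ublk, h1r, hv]
          rw [hU, zero_mul, if_neg h1r, if_neg h2r, add_zero]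
    rw [Finset.sum_congr rfl fun r _ => step r, Finset.sum_add_distrib]
    simp only [Finset.sum_ite_eq', Finset.mem_univ, if_true]
    by_cases hq1 : q = p
    · subst hq1
      have hLqq : Lblk A B t q q = if q = 0 then (1 - t ^ n • (A * B ^ n)) else 1 := by
        simp [Lblk]
      have hLp'q : Lblk A B t p' q =
          if q = 0 then -(t ^ (n - ((p' : Fin n) : ℕ)) • B ^ (n - ((p' : Fin n) : ℕ))) else 0 := by
        have : q ≠ p' := fun h => hp'np h.symm
        simp [Lblk, this]
      have hM : Mblk A B t q q = 1 := by simp [Mblk]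
      rw [hLqq, hLp'q, hM]
      by_cases hq0 : q = 0
      · rw [if_pos hq0, if_pos hq0]
        have hC : Cb A B t q = -(t • (A * B)) := by simp [Cb, hq0]
        have hval : ((p' : Fin n) : ℕ) = (q : ℕ) + 1 := rfl
        have hq0' : (q : ℕ) = 0 := by rw [hq0]; rfl
        rw [hC, key]
        have hpow1 : t * t ^ (n - ((p' : Fin n) : ℕ)) = t ^ n := by
          rw [hval, hq0']
          rw [← pow_succ']
          congr 1
          omega
        have hpow2 : A * B * B ^ (n - ((p' : Fin n) : ℕ)) = A * B ^ n := by
          rw [hval, hq0', mul_assoc, ← pow_succ']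
          congr 2
          omega
        rw [hpow1, hpow2, sub_add_cancel]
      · rw [if_neg hq0, if_neg hq0, mul_zero, add_zero]
    · have hLpq : Lblk A B t p q =
          if q = 0 then -(t ^ (n - (p : ℕ)) • B ^ (n - (p : ℕ))) else 0 := by
        simp [Lblk, hq1]
      have hM : Mblk A B t p q = if q = p' then Cb A B t p else 0 := by
        simp [Mblk, hq1, hpadd]
      rw [hLpq, hM]
      by_cases hq2 : q = p'
      · have hq0 : q ≠ 0 := fun h => hp'n0 (hq2.symm.trans h)
        have hL1 : Lblk A B t p' q = 1 := by simp [Lblk, hq2, hp'n0]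
        rw [hL1, mul_one, if_pos hq2, if_neg hq0, zero_add]
      · rw [if_neg hq2]
        have hLp'q : Lblk A B t p' q =
            if q = 0 then -(t ^ (n - ((p' : Fin n) : ℕ)) • B ^ (n - ((p' : Fin n) : ℕ))) else 0 := by
          simp [Lblk, hq2]
        rw [hLp'q]
        by_cases hq0 : q = 0
        · rw [if_pos hq0, if_pos hq0]
          have hp0 : p ≠ 0 := by
            intro h; exact hq1 (hq0.trans h.symm)
          have hC : Cb A B t p = -(t • B) := by simp [Cb, hp0]
          rw [hC, key]
          have hval : ((p' : Fin n) : ℕ) = (p : ℕ) + 1 := rfl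
          have hpow1 : t * t ^ (n - ((p' : Fin n) : ℕ)) = t ^ (n - (p : ℕ)) := by
            rw [hval, ← pow_succ']
            congr 1
            omega
          have hpow2 : B * B ^ (n - ((p' : Fin n) : ℕ)) = B ^ (n - (p : ℕ)) := by
            rw [hval, ← pow_succ']
            congr 1
            omega
          rw [hpow1, hpow2, neg_add_cancel]
        · rw [if_neg hq0, if_neg hq0, mul_zero, add_zero]
  · have hpn : (p : ℕ) + 1 = n := by
      have := p.isLt
      omega
    have step : ∀ r : Fin n, Ublk A B t p r * Lblk A B t r q
        = if r = p then Lblk A B t p q else 0 := by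
      intro r
      by_cases h1r : r = p
      · subst h1r
        have hU : Ublk A B t r r = 1 := by simp [Ublk]
        rw [hU, one_mul, if_pos rfl]
      · have hU : Ublk A B t p r = 0 := by
          have hv : ¬((r : ℕ) = (p : ℕ) + 1) := by
            have := r.isLt
            omega
          simp [Ublk, h1r, hv]
        rw [hU, zero_mul, if_neg h1r]
    rw [Finset.sum_congr rfl fun r _ => step r]
    simp only [Finset.sum_ite_eq', Finset.mem_univ, if_true]
    have hp0 : p ≠ 0 := by
      intro h
      have := congrArg Fin.val h
      rw [Fin.val_zero] at this
      omega
    have hpadd : p + 1 = 0 := by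
      apply Fin.ext
      rw [Fin.val_add, h1, Fin.val_zero, hpn, Nat.mod_self]
    by_cases hq1 : q = p
    · subst hq1
      simp [Lblk, Mblk, hp0]
    · have hM : Mblk A B t p q = if q = 0 then Cb A B t p else 0 := by
        simp [Mblk, hq1, hpadd]
      have hL : Lblk A B t p q =
          if q = 0 then -(t ^ (n - (p : ℕ)) • B ^ (n - (p : ℕ))) else 0 := by
        simp [Lblk, hq1]
      rw [hM, hL]
      by_cases hq0 : q = 0
      · rw [if_pos hq0, if_pos hq0]
        have hexp : n - (p : ℕ) = 1 := by omega
        simp [Cb, hp0, hexp]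
      · rw [if_neg hq0, if_neg hq0]

theorem blockTriangular_U (A B : Matrix (Fin m) (Fin m) R) (t : R) :
    BlockTriangular (Matrix.comp (Fin n) (Fin n) (Fin m) (Fin m) R (Ublk A B t))
      (fun p : Fin n × Fin m => p.1) := by
  intro i j hlt
  have hlt2 : j.1 < i.1 := hlt
  have h1 : j.1 ≠ i.1 := ne_of_lt hlt2
  have h2 : ¬((j.1 : ℕ) = (i.1 : ℕ) + 1) := by
    have := Fin.lt_def.mp hlt2
    omega
  simp [Matrix.comp_apply, Ublk, h1, h2]

theorem blockTriangular_L (A B : Matrix (Fin m) (Fin m) R) (t : R) :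
    BlockTriangular (Matrix.comp (Fin n) (Fin n) (Fin m) (Fin m) R (Lblk A B t))
      (fun p : Fin n × Fin m => OrderDual.toDual p.1) := by
  intro i j hlt
  have hlt' : i.1 < j.1 := hlt
  have h1 : j.1 ≠ i.1 := ne_of_gt hlt'
  have h2 : j.1 ≠ 0 := by
    intro h
    rw [h] at hlt'
    exact absurd hlt' (by simp [Fin.lt_def])
  simp [Matrix.comp_apply, Lblk, h1, h2]

theorem det_U (A B : Matrix (Fin m) (Fin m) R) (t : R) :
    (Matrix.comp (Fin n) (Fin n) (Fin m) (Fin m) R (Ublk A B t)).det = 1 := by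
  rw [(blockTriangular_U A B t).det_fintype]
  refine Finset.prod_eq_one fun k _ => ?_
  have : (Matrix.comp (Fin n) (Fin n) (Fin m) (Fin m) R (Ublk A B t)).toSquareBlock
      (fun p : Fin n × Fin m => p.1) k = 1 := by
    ext a b
    obtain ⟨⟨pa, ia⟩, (ha : pa = k)⟩ := a
    obtain ⟨⟨pb, ib⟩, (hb : pb = k)⟩ := b
    subst ha hb
    simp [Matrix.toSquareBlock, Matrix.toSquareBlockProp, Matrix.comp_apply, Ublk,
      Matrix.one_apply, Subtype.ext_iff, Prod.ext_iff]
  rw [this, Matrix.det_one]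

/-- The equivalence between the `0`-block index set and `Fin m`. -/
def e0 : {a : Fin n × Fin m //
    (fun p : Fin n × Fin m => OrderDual.toDual p.1) a = OrderDual.toDual (0 : Fin n)} ≃ Fin m where
  toFun a := a.1.2
  invFun j := ⟨(0, j), rfl⟩
  left_inv := by
    rintro ⟨⟨pa, ia⟩, ha⟩
    have : pa = 0 := OrderDual.toDual_inj.mp ha
    subst this
    rfl
  right_inv j := rfl

@[simp] lemma e0_apply (a : {a : Fin n × Fin m //
    (fun p : Fin n × Fin m => OrderDual.toDual p.1) a = OrderDual.toDual (0 : Fin n)}) :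
    e0 a = a.1.2 := rfl

theorem det_L (A B : Matrix (Fin m) (Fin m) R) (t : R) :
    (Matrix.comp (Fin n) (Fin n) (Fin m) (Fin m) R (Lblk A B t)).det =
      ((1 : Matrix (Fin m) (Fin m) R) - t ^ n • (A * B ^ n)).det := by
  rw [(blockTriangular_L A B t).det_fintype]
  rw [Fintype.prod_eq_single (OrderDual.toDual (0 : Fin n))]
  · set E := (1 : Matrix (Fin m) (Fin m) R) - t ^ n • (A * B ^ n) with hE
    have hblk : (Matrix.comp (Fin n) (Fin n) (Fin m) (Fin m) R (Lblk A B t)).toSquareBlock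
        (fun p : Fin n × Fin m => OrderDual.toDual p.1) (OrderDual.toDual (0 : Fin n))
        = E.submatrix (e0 (n := n) (m := m)) (e0 (n := n) (m := m)) := by
      ext a b
      obtain ⟨⟨pa, ia⟩, ha⟩ := a
      obtain ⟨⟨pb, ib⟩, hb⟩ := b
      have ha' : pa = 0 := OrderDual.toDual_inj.mp ha
      have hb' : pb = 0 := OrderDual.toDual_inj.mp hb
      subst ha' hb'
      simp [Matrix.toSquareBlock, Matrix.toSquareBlockProp, Matrix.comp_apply, Lblk,
        Matrix.submatrix, hE, e0]
      rfl
    rw [hblk]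
    exact Matrix.det_submatrix_equiv_self _ E
  · intro k hk
    have hk' : (OrderDual.ofDual k : Fin n) ≠ 0 := by
      intro h
      exact hk (by simp [← h])
    have : (Matrix.comp (Fin n) (Fin n) (Fin m) (Fin m) R (Lblk A B t)).toSquareBlock
        (fun p : Fin n × Fin m => OrderDual.toDual p.1) k = 1 := by
      ext a b
      obtain ⟨⟨pa, ia⟩, ha⟩ := a
      obtain ⟨⟨pb, ib⟩, hb⟩ := b
      have ha' : pa = OrderDual.ofDual k := OrderDual.toDual_inj.mp ha
      have hb' : pb = OrderDual.ofDual k := OrderDual.toDual_inj.mp hb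
      have hpb0 : pb ≠ 0 := by rw [hb']; exact hk'
      have hpa0 : pa ≠ 0 := by rw [ha']; exact hk'
      have hpe : pb = pa := by rw [ha', hb']
      simp [Matrix.toSquareBlock, Matrix.toSquareBlockProp, Matrix.comp_apply, Lblk,
        Matrix.one_apply, Subtype.ext_iff, Prod.ext_iff, hpe, hpb0, hpa0]
    rw [this, Matrix.det_one]

end DetCyclicAux

/-- block-determinant lemma.  For `m × m` matrices `A, B` over a
commutative ring and a scalar `t`, the `n·m × n·m` block matrix with identity blocks
on the diagonal, block `−t·AB` in position `(1,2)`, blocks `−t·B` in positions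
`(2,3), …, (n−1,n)` and `(n,1)`, and zeros elsewhere, has determinant
`det(I_m − tⁿ·A·Bⁿ)`. -/
theorem det_cyclic_block_matrix {R : Type*} [CommRing R] {n m : ℕ} [NeZero n]
    (hn : 2 ≤ n) (A B : Matrix (Fin m) (Fin m) R) (t : R) :
    (Matrix.of (fun p q : Fin n × Fin m =>
        if q.1 = p.1 then (1 : Matrix (Fin m) (Fin m) R) p.2 q.2
        else if q.1 = p.1 + 1 then
          (if p.1 = 0 then (-(t • (A * B))) p.2 q.2 else (-(t • B)) p.2 q.2)
        else 0)).det =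
      ((1 : Matrix (Fin m) (Fin m) R) - t ^ n • (A * B ^ n)).det := by
  classical
  have hM : (Matrix.of (fun p q : Fin n × Fin m =>
        if q.1 = p.1 then (1 : Matrix (Fin m) (Fin m) R) p.2 q.2
        else if q.1 = p.1 + 1 then
          (if p.1 = 0 then (-(t • (A * B))) p.2 q.2 else (-(t • B)) p.2 q.2)
        else 0))
      = Matrix.comp (Fin n) (Fin n) (Fin m) (Fin m) R (DetCyclicAux.Mblk A B t) := by
    ext ⟨p, i⟩ ⟨q, j⟩
    simp only [Matrix.of_apply, Matrix.comp_apply, DetCyclicAux.Mblk, DetCyclicAux.Cb]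
    split_ifs <;> rfl
  rw [hM, ← DetCyclicAux.mul_eq hn A B t]
  have hmul : Matrix.comp (Fin n) (Fin n) (Fin m) (Fin m) R
      (DetCyclicAux.Ublk A B t * DetCyclicAux.Lblk A B t)
      = Matrix.comp (Fin n) (Fin n) (Fin m) (Fin m) R (DetCyclicAux.Ublk A B t)
        * Matrix.comp (Fin n) (Fin n) (Fin m) (Fin m) R (DetCyclicAux.Lblk A B t) := by
    have := map_mul (Matrix.compRingEquiv (Fin n) (Fin m) R)
      (DetCyclicAux.Ublk A B t) (DetCyclicAux.Lblk A B t)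
    exact this
  rw [hmul, Matrix.det_mul, DetCyclicAux.det_U A B t, DetCyclicAux.det_L A B t, one_mul]
end
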